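/- Let η > 0, let (c_k)_{k≥1} be complex numbers, (φ_k)_{k≥1} real numbers, and γ_k : (0,∞) → ℂ functions; set β_k(x) = c_k e^{−iφ_k x} γ_k(x) and σ(x) = sup_k |γ_k(x)|. Then for all integers J ≥ 2 and 0 ≤ K ≤ J and every x ∈ (0,∞), Σ_{m_1,…,m_J=1}^∞ | f_{J,K}(η; φ_{m_1},…,φ_{m_J}) β_{m_1}(x) ⋯ β_{m_J}(x) | ≤ (1/η) · ( (1/2) E_{J−1,K−1} + E_{J−1,K} + (1/2) E_{J−1,K+1} ) · ( Σ_{l=1}^∞ |c_l| ) · σ(x)^J, where E_{J,K} := Σ_{m_1,…,m_J=1}^∞ |c_{m_1} ⋯ c_{m_J} g_{J,K}(η; φ_{m_1},…,φ_{m_J})| ∈ [0,∞]. In particular, if the right-hand side is finite, then the series S_{J,K}(x) = Σ_{m_1,…,m_J=1}^∞ f_{J,K}(η; φ_{m_1},…,φ_{m_J}) β_{m_1}(x) ⋯ β_{m_J}(x) e^{iK(ηx + 2θ)} converges absolutely for any θ ∈ ℝ. -/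

import Mathlib

open scoped BigOperators ENNReal
open MeasureTheory

/-- Pad a tuple `m : Fin J → ℕ` of indices into a function `ℕ → ℝ` listing `φ_{m_1},…,φ_{m_J}`. -/
noncomputable def padFin (J : ℕ) (φ : ℕ → ℝ) (m : Fin J → ℕ) : ℕ → ℝ :=
  fun n => if h : n < J then φ (m ⟨n, h⟩) else 0

/-- ω_a coefficients: ω_0 = -1, ω_{±1} = 1/2, otherwise 0. -/
noncomputable def omegaCoef : ℤ → ℝ := fun a =>
  if a = 0 then -1 else if a = 1 ∨ a = -1 then (1 : ℝ) / 2 else 0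

/-- The functions `f_{J,K}` of `1+J` real variables (extra variables beyond the first `J`
are ignored); `f_{J,K} = 0` unless `1 ≤ J` and `0 ≤ K ≤ J`. For `J ≥ 2`,
`f_{J,K}(η;φ) = η⁻¹ Σ_{a=-1}^{1} ω_a (1/J!) Σ_{σ ∈ S_J} g_{J-1,K+a}(η;φ_{σ(1)},…,φ_{σ(J-1)})`,
where `g_{J,K}(η;φ) = -2K (Kη - φ_1 - ⋯ - φ_J)⁻¹ f_{J,K}(η;φ)` is inlined. -/
noncomputable def fAux : ℕ → ℤ → ℝ → (ℕ → ℝ) → ℝ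
  | 0, _, _, _ => 0
  | 1, K, η, _ => if K = 0 then -η⁻¹ else if K = 1 then η⁻¹ else 0
  | (J+2), K, η, φ =>
      if 0 ≤ K ∧ K ≤ (J : ℤ) + 2 then
        η⁻¹ * ∑ a ∈ ({-1, 0, 1} : Finset ℤ), omegaCoef a *
          ((Nat.factorial (J+2) : ℝ)⁻¹ *
            ∑ σ : Equiv.Perm (Fin (J+2)),
              (fun ψ : ℕ → ℝ =>
                (-2 * ((K + a : ℤ) : ℝ)) /
                    (((K + a : ℤ) : ℝ) * η - ∑ i ∈ Finset.range (J+1), ψ i) *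
                  fAux (J+1) (K+a) η ψ)
              (fun i => if h : i < J+2 then φ (σ ⟨i, h⟩) else φ i))
      else 0

/-- The functions `g_{J,K} = -2K (Kη - φ_1 - ⋯ - φ_J)⁻¹ f_{J,K}`. -/
noncomputable def gAux (J : ℕ) (K : ℤ) (η : ℝ) (φ : ℕ → ℝ) : ℝ :=
  (-2 * (K : ℝ)) / ((K : ℝ) * η - ∑ i ∈ Finset.range J, φ i) * fAux J K η φ

/-- Symmetric product `p ⊙ q` of a function of `1+I` variables and one of `1+J` variables. -/
noncomputable def symProd (I J : ℕ) (p q : ℝ → (ℕ → ℝ) → ℝ) (η : ℝ) (φ : ℕ → ℝ) : ℝ :=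
  (Nat.factorial (I + J) : ℝ)⁻¹ *
    ∑ σ : Equiv.Perm (Fin (I + J)),
      p η (fun i => if h : i < I + J then φ (σ ⟨i, h⟩) else φ i) *
      q η (fun i => if h : i + I < I + J then φ (σ ⟨i + I, h⟩) else φ (i + I))

/-- `E_{J,K} = Σ_{m_1,…,m_J} |c_{m_1} ⋯ c_{m_J} g_{J,K}(η;φ_{m_1},…,φ_{m_J})| ∈ [0,∞]`. -/
noncomputable def EFun (η : ℝ) (c : ℕ → ℂ) (φ : ℕ → ℝ) (J : ℕ) (K : ℤ) : ℝ≥0∞ :=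
  ∑' m : Fin J → ℕ,
    (‖∏ i, c (m i)‖₊ : ℝ≥0∞) * (‖gAux J K η (padFin J φ m)‖₊ : ℝ≥0∞)

set_option maxHeartbeats 1000000

lemma fAux_congr : ∀ (J : ℕ) (K : ℤ) (η : ℝ) (φ φ' : ℕ → ℝ),
    (∀ i, i < J → φ i = φ' i) → fAux J K η φ = fAux J K η φ' := by
  intro J
  induction J using Nat.strong_induction_on with
  | _ J ih =>
    match J with
    | 0 => intros; rfl
    | 1 => intros; rfl
    | (n+2) =>
      intro K η φ φ' h
      simp only [fAux]
      split_ifs with hc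
      · congr 1
        refine Finset.sum_congr rfl fun a _ => ?_
        congr 2
        refine Finset.sum_congr rfl fun σ _ => ?_
        have hagree : ∀ i, i < n+1 →
            (if h : i < n+2 then φ (σ ⟨i, h⟩) else φ i) =
            (if h : i < n+2 then φ' (σ ⟨i, h⟩) else φ' i) := by
          intro i hi
          have hi2 : i < n+2 := Nat.lt_succ_of_lt hi
          rw [dif_pos hi2, dif_pos hi2, h _ (σ ⟨i, hi2⟩).isLt]
        have hsum : ∑ i ∈ Finset.range (n+1), (if h : i < n+2 then φ (σ ⟨i, h⟩) else φ i)
            = ∑ i ∈ Finset.range (n+1), (if h : i < n+2 then φ' (σ ⟨i, h⟩) else φ' i) :=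
          Finset.sum_congr rfl fun i hi => hagree i (Finset.mem_range.1 hi)
        rw [hsum, ih (n+1) (by omega) (K+a) η _ _ hagree]
      · rfl

lemma gAux_congr (J : ℕ) (K : ℤ) (η : ℝ) (φ φ' : ℕ → ℝ)
    (h : ∀ i, i < J → φ i = φ' i) : gAux J K η φ = gAux J K η φ' := by
  unfold gAux
  rw [fAux_congr J K η φ φ' h,
    Finset.sum_congr rfl fun i hi => h i (Finset.mem_range.1 hi)]

lemma fAux_expand (n : ℕ) (K : ℤ) (hc : 0 ≤ K ∧ K ≤ (n : ℤ) + 2) (η : ℝ) (ψ : ℕ → ℝ) :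
    fAux (n+2) K η ψ = η⁻¹ * ∑ a ∈ ({-1, 0, 1} : Finset ℤ), omegaCoef a *
      ((Nat.factorial (n+2) : ℝ)⁻¹ * ∑ σ : Equiv.Perm (Fin (n+2)),
        gAux (n+1) (K+a) η (fun i => if h : i < n+2 then ψ (σ ⟨i, h⟩) else ψ i)) := by
  simp only [fAux, gAux, if_pos hc]

lemma fAux_nnnorm_le (n : ℕ) (K : ℤ) (hc : 0 ≤ K ∧ K ≤ (n : ℤ) + 2) (η : ℝ) (ψ : ℕ → ℝ) :
    (‖fAux (n+2) K η ψ‖₊ : ℝ≥0∞) ≤ (‖η⁻¹‖₊ : ℝ≥0∞) * ∑ a ∈ ({-1, 0, 1} : Finset ℤ),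
      (‖omegaCoef a‖₊ : ℝ≥0∞) * ((‖((Nat.factorial (n+2) : ℝ))⁻¹‖₊ : ℝ≥0∞) *
        ∑ σ : Equiv.Perm (Fin (n+2)),
          (‖gAux (n+1) (K+a) η (fun i => if h : i < n+2 then ψ (σ ⟨i, h⟩) else ψ i)‖₊ : ℝ≥0∞)) := by
  have hnn : ‖fAux (n+2) K η ψ‖₊ ≤ ‖η⁻¹‖₊ * ∑ a ∈ ({-1, 0, 1} : Finset ℤ),
      ‖omegaCoef a‖₊ * (‖((Nat.factorial (n+2) : ℝ))⁻¹‖₊ *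
        ∑ σ : Equiv.Perm (Fin (n+2)),
          ‖gAux (n+1) (K+a) η (fun i => if h : i < n+2 then ψ (σ ⟨i, h⟩) else ψ i)‖₊) := by
    rw [fAux_expand n K hc η ψ, nnnorm_mul]
    refine mul_le_mul_right ?_ _
    refine (nnnorm_sum_le _ _).trans ?_
    refine Finset.sum_le_sum fun a _ => ?_
    rw [nnnorm_mul, nnnorm_mul]
    exact mul_le_mul_right (mul_le_mul_right (nnnorm_sum_le _ _) _) _
  calc ((‖fAux (n+2) K η ψ‖₊ : ℝ≥0∞)) ≤ _ := ENNReal.coe_le_coe.2 hnn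
  _ = _ := by push_cast [ENNReal.coe_mul, ENNReal.coe_finset_sum]; rfl

/-- the equiv `m ↦ m ∘ σ`. -/
def permCompEquiv {N : ℕ} (σ : Equiv.Perm (Fin N)) : (Fin N → ℕ) ≃ (Fin N → ℕ) where
  toFun m := fun i => m (σ i)
  invFun m := fun i => m (σ.symm i)
  left_inv m := funext fun i => by simp
  right_inv m := funext fun i => by simp

/-- the equiv `(m, y) ↦ snoc m y`. -/
def snocEquiv (N : ℕ) : ((Fin N → ℕ) × ℕ) ≃ (Fin (N+1) → ℕ) where
  toFun p := Fin.snoc p.1 p.2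
  invFun m := (fun j => m j.castSucc, m (Fin.last N))
  left_inv p := by
    refine Prod.ext (funext fun j => ?_) ?_
    · simp [Fin.snoc_castSucc]
    · simp [Fin.snoc_last]
  right_inv m := funext fun i => by
    refine Fin.lastCases ?_ (fun j => ?_) i
    · simp [Fin.snoc_last]
    · simp [Fin.snoc_castSucc]

lemma tsum_rearrange {N : ℕ} {κ : Type*} [Fintype κ] (s : Finset ℤ) (C : ℝ≥0∞)
    (w F : ℤ → ℝ≥0∞) (g : ℤ → κ → (Fin N → ℕ) → ℝ≥0∞) (P : (Fin N → ℕ) → ℝ≥0∞) :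
    ∑' m : Fin N → ℕ, (C * ∑ a ∈ s, w a * (F a * ∑ σ : κ, g a σ m)) * P m
      = C * ∑ a ∈ s, w a * (F a * ∑ σ : κ, ∑' m : Fin N → ℕ, g a σ m * P m) := by
  calc ∑' m : Fin N → ℕ, (C * ∑ a ∈ s, w a * (F a * ∑ σ : κ, g a σ m)) * P m
      = ∑' m : Fin N → ℕ, C * ∑ a ∈ s, w a * (F a * ∑ σ : κ, g a σ m * P m) := by
        refine tsum_congr fun m => ?_
        rw [mul_assoc, Finset.sum_mul]
        congr 1
        refine Finset.sum_congr rfl fun a _ => ?_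
        rw [mul_assoc, mul_assoc, Finset.sum_mul]
    _ = C * ∑' m : Fin N → ℕ, ∑ a ∈ s, w a * (F a * ∑ σ : κ, g a σ m * P m) :=
        ENNReal.tsum_mul_left
    _ = C * ∑ a ∈ s, ∑' m : Fin N → ℕ, w a * (F a * ∑ σ : κ, g a σ m * P m) := by
        rw [Summable.tsum_finsetSum (fun _ _ => ENNReal.summable)]
    _ = _ := by
        congr 1
        refine Finset.sum_congr rfl fun a _ => ?_
        rw [ENNReal.tsum_mul_left, ENNReal.tsum_mul_left,
          Summable.tsum_finsetSum (fun _ _ => ENNReal.summable)]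

theorem stmt10 (η : ℝ) (hη : 0 < η)
    (c : ℕ → ℂ) (φ : ℕ → ℝ) (γ : ℕ → ℝ → ℂ)
    (J K : ℕ) (hJ : 2 ≤ J) (hK : K ≤ J) (x : ℝ) (hx : 0 < x) :
    (∑' m : Fin J → ℕ,
        (‖(fAux J (K : ℤ) η (padFin J φ m) : ℂ) *
            ∏ i, (c (m i) * Complex.exp (-Complex.I * φ (m i) * x) * γ (m i) x)‖₊ : ℝ≥0∞))
      ≤ (ENNReal.ofReal η)⁻¹ *
        ((1 / 2) * EFun η c φ (J - 1) ((K : ℤ) - 1) + EFun η c φ (J - 1) (K : ℤ) +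
          (1 / 2) * EFun η c φ (J - 1) ((K : ℤ) + 1)) *
        (∑' l, (‖c l‖₊ : ℝ≥0∞)) * (⨆ k, (‖γ k x‖₊ : ℝ≥0∞)) ^ J ∧
    ((ENNReal.ofReal η)⁻¹ *
        ((1 / 2) * EFun η c φ (J - 1) ((K : ℤ) - 1) + EFun η c φ (J - 1) (K : ℤ) +
          (1 / 2) * EFun η c φ (J - 1) ((K : ℤ) + 1)) *
        (∑' l, (‖c l‖₊ : ℝ≥0∞)) * (⨆ k, (‖γ k x‖₊ : ℝ≥0∞)) ^ J < ⊤ →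
      ∀ θ : ℝ, Summable fun m : Fin J → ℕ =>
        ‖(fAux J (K : ℤ) η (padFin J φ m) : ℂ) *
            (∏ i, (c (m i) * Complex.exp (-Complex.I * φ (m i) * x) * γ (m i) x)) *
            Complex.exp (Complex.I * K * (η * x + 2 * θ))‖) := by
  obtain ⟨n, rfl⟩ : ∃ n, J = n + 2 := ⟨J - 2, by omega⟩
  have hcond : (0:ℤ) ≤ (K:ℤ) ∧ (K:ℤ) ≤ (n:ℤ) + 2 := ⟨Int.natCast_nonneg K, by exact_mod_cast hK⟩
  set S := ⨆ k, (‖γ k x‖₊ : ℝ≥0∞) with hSdef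
  set b : ℕ → ℝ≥0∞ := fun k => (‖c k‖₊ : ℝ≥0∞) * (‖γ k x‖₊ : ℝ≥0∞) with hbdef
  set G : ℤ → (Fin (n+1) → ℕ) → ℝ≥0∞ :=
    fun a m' => (‖gAux (n+1) a η (padFin (n+1) φ m')‖₊ : ℝ≥0∞) with hGdef
  -- norm of each β factor
  have hbeta : ∀ k, (‖c k * Complex.exp (-Complex.I * φ k * x) * γ k x‖₊ : ℝ≥0∞) = b k := by
    intro k
    have hre : -Complex.I * (φ k : ℂ) * (x : ℂ) = ((-(φ k * x) : ℝ) : ℂ) * Complex.I := by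
      push_cast; ring
    have hexp : ‖Complex.exp (-Complex.I * (φ k : ℂ) * (x : ℂ))‖₊ = 1 := by
      refine NNReal.eq ?_
      rw [coe_nnnorm, hre]
      simpa using Complex.norm_exp_ofReal_mul_I (-(φ k * x))
    rw [nnnorm_mul, nnnorm_mul, hexp, mul_one, hbdef, ENNReal.coe_mul]
  -- each summand
  have hterm : ∀ m : Fin (n+2) → ℕ,
      (‖(fAux (n+2) (K : ℤ) η (padFin (n+2) φ m) : ℂ) *
          ∏ i, (c (m i) * Complex.exp (-Complex.I * φ (m i) * x) * γ (m i) x)‖₊ : ℝ≥0∞)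
      = (‖fAux (n+2) (K : ℤ) η (padFin (n+2) φ m)‖₊ : ℝ≥0∞) * ∏ i, b (m i) := by
    intro m
    rw [nnnorm_mul, Complex.nnnorm_real, nnnorm_prod, ENNReal.coe_mul, ENNReal.coe_finset_prod]
    exact congrArg _ (Finset.prod_congr rfl fun i _ => hbeta (m i))
  -- permuted pads
  have hGperm : ∀ (a : ℤ) (σ : Equiv.Perm (Fin (n+2))) (m : Fin (n+2) → ℕ),
      gAux (n+1) ((K:ℤ)+a) η
        (fun i => if h : i < n+2 then padFin (n+2) φ m (σ ⟨i, h⟩) else padFin (n+2) φ m i)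
      = gAux (n+1) ((K:ℤ)+a) η (padFin (n+1) φ (fun j => m (σ j.castSucc))) := by
    intro a σ m
    refine gAux_congr _ _ _ _ _ fun i hi => ?_
    have hi2 : i < n + 2 := by omega
    rw [dif_pos hi2]
    simp only [padFin, dif_pos hi, dif_pos (σ ⟨i, hi2⟩).isLt]
    congr 1
  -- split off the last coordinate
  have hsplit : ∀ (a : ℤ) (σ : Equiv.Perm (Fin (n+2))),
      (∑' m : Fin (n+2) → ℕ, G ((K:ℤ)+a) (fun j => m (σ j.castSucc)) * ∏ i, b (m i))
      = (∑' m' : Fin (n+1) → ℕ, G ((K:ℤ)+a) m' * ∏ i, b (m' i)) * ∑' y, b y := by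
    intro a σ
    have h1 : (∑' m : Fin (n+2) → ℕ, G ((K:ℤ)+a) (fun j => m (σ j.castSucc)) * ∏ i, b (m i))
        = ∑' m : Fin (n+2) → ℕ, G ((K:ℤ)+a) (fun j => m j.castSucc) * ∏ i, b (m i) := by
      calc (∑' m : Fin (n+2) → ℕ, G ((K:ℤ)+a) (fun j => m (σ j.castSucc)) * ∏ i, b (m i))
          = ∑' m : Fin (n+2) → ℕ,
              G ((K:ℤ)+a) (fun j => (permCompEquiv σ m) j.castSucc) *
                ∏ i, b ((permCompEquiv σ m) i) :=
            tsum_congr fun m => congrArg₂ (· * ·) rfl (Equiv.prod_comp σ (fun i => b (m i))).symm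
        _ = _ := Equiv.tsum_eq (permCompEquiv σ)
              (fun m => G ((K:ℤ)+a) (fun j => m j.castSucc) * ∏ i, b (m i))
    rw [h1, ← Equiv.tsum_eq (snocEquiv (n+1)) (fun m => G ((K:ℤ)+a) (fun j => m j.castSucc) * ∏ i, b (m i))]
    have h2 : ∀ p : (Fin (n+1) → ℕ) × ℕ,
        G ((K:ℤ)+a) (fun j => (snocEquiv (n+1) p) j.castSucc) * ∏ i, b ((snocEquiv (n+1) p) i)
        = G ((K:ℤ)+a) p.1 * (∏ i, b (p.1 i)) * b p.2 := by
      intro p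
      have e1 : (fun j => (snocEquiv (n+1) p) j.castSucc) = p.1 :=
        funext fun j => by simp [snocEquiv]
      have e2 : (∏ i, b ((snocEquiv (n+1) p) i)) = (∏ i, b (p.1 i)) * b p.2 := by
        rw [Fin.prod_univ_castSucc]
        simp only [snocEquiv, Equiv.coe_fn_mk, Fin.snoc_castSucc, Fin.snoc_last]
      rw [e1, e2, ← mul_assoc]
    calc (∑' p : (Fin (n+1) → ℕ) × ℕ,
            G ((K:ℤ)+a) (fun j => (snocEquiv (n+1) p) j.castSucc) * ∏ i, b ((snocEquiv (n+1) p) i))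
        = ∑' p : (Fin (n+1) → ℕ) × ℕ, G ((K:ℤ)+a) p.1 * (∏ i, b (p.1 i)) * b p.2 :=
          tsum_congr fun p => h2 p
      _ = ∑' m' : Fin (n+1) → ℕ, ∑' y : ℕ, G ((K:ℤ)+a) m' * (∏ i, b (m' i)) * b y :=
          ENNReal.tsum_prod (f := fun m' y => G ((K:ℤ)+a) m' * (∏ i, b (m' i)) * b y)
      _ = _ := by
          rw [← ENNReal.tsum_mul_right]
          exact tsum_congr fun m' => ENNReal.tsum_mul_left
  -- bound for the inner tsum
  have hbound : ∀ a : ℤ, (∑' m' : Fin (n+1) → ℕ, G ((K:ℤ)+a) m' * ∏ i, b (m' i))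
      ≤ EFun η c φ (n+1) ((K:ℤ)+a) * S ^ (n+1) := by
    intro a
    calc (∑' m' : Fin (n+1) → ℕ, G ((K:ℤ)+a) m' * ∏ i, b (m' i))
        ≤ ∑' m' : Fin (n+1) → ℕ,
            G ((K:ℤ)+a) m' * ((∏ i, (‖c (m' i)‖₊ : ℝ≥0∞)) * S ^ (n+1)) := by
          refine ENNReal.tsum_le_tsum fun m' => mul_le_mul_right ?_ _
          simp only [hbdef]
          rw [Finset.prod_mul_distrib]
          refine mul_le_mul_right ?_ _
          calc (∏ i, (‖γ (m' i) x‖₊ : ℝ≥0∞)) ≤ ∏ _i : Fin (n+1), S :=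
                Finset.prod_le_prod' fun i _ => le_iSup (fun k => (‖γ k x‖₊ : ℝ≥0∞)) (m' i)
            _ = S ^ (n+1) := by
                rw [Finset.prod_const, Finset.card_univ, Fintype.card_fin]
      _ = EFun η c φ (n+1) ((K:ℤ)+a) * S ^ (n+1) := by
          rw [EFun, ← ENNReal.tsum_mul_right]
          refine tsum_congr fun m' => ?_
          rw [nnnorm_prod, ENNReal.coe_finset_prod, hGdef]
          ring
  have hlast : (∑' y, b y) ≤ (∑' l, (‖c l‖₊ : ℝ≥0∞)) * S := by
    rw [← ENNReal.tsum_mul_right]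
    refine ENNReal.tsum_le_tsum fun y => ?_
    simp only [hbdef]
    exact mul_le_mul_right (le_iSup (fun k => (‖γ k x‖₊ : ℝ≥0∞)) y) _
  have hfact : (‖((Nat.factorial (n+2) : ℝ))⁻¹‖₊ : ℝ≥0∞) * ((Nat.factorial (n+2) : ℕ) : ℝ≥0∞) = 1 := by
    rw [← enorm_eq_nnnorm, Real.enorm_eq_ofReal (by positivity), ENNReal.ofReal_inv_of_pos (by positivity),
      ENNReal.ofReal_natCast]
    exact ENNReal.inv_mul_cancel (by simp [Nat.factorial_ne_zero]) (ENNReal.natCast_ne_top _)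
  have hCη : (‖η⁻¹‖₊ : ℝ≥0∞) = (ENNReal.ofReal η)⁻¹ := by
    rw [← enorm_eq_nnnorm, Real.enorm_eq_ofReal (inv_nonneg.2 hη.le), ENNReal.ofReal_inv_of_pos hη]
  have hw0 : (‖omegaCoef 0‖₊ : ℝ≥0∞) = 1 := by
    simp [omegaCoef]
  have hhalf : (‖(1/2 : ℝ)‖₊ : ℝ≥0∞) = 1/2 := by
    rw [show (1/2 : ℝ) = 2⁻¹ by norm_num, ← enorm_eq_nnnorm, Real.enorm_eq_ofReal (by norm_num),
      ENNReal.ofReal_inv_of_pos (by norm_num), ENNReal.ofReal_ofNat, one_div]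
  have hw1 : (‖omegaCoef 1‖₊ : ℝ≥0∞) = 1/2 := by
    rw [show omegaCoef 1 = 1/2 by simp [omegaCoef], hhalf]
  have hwm1 : (‖omegaCoef (-1)‖₊ : ℝ≥0∞) = 1/2 := by
    rw [show omegaCoef (-1) = 1/2 by simp [omegaCoef], hhalf]
  -- the main estimate
  have hmain : (∑' m : Fin (n+2) → ℕ,
      (‖(fAux (n+2) (K : ℤ) η (padFin (n+2) φ m) : ℂ) *
          ∏ i, (c (m i) * Complex.exp (-Complex.I * φ (m i) * x) * γ (m i) x)‖₊ : ℝ≥0∞))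
      ≤ (ENNReal.ofReal η)⁻¹ *
        ((1 / 2) * EFun η c φ (n+1) ((K : ℤ) - 1) + EFun η c φ (n+1) (K : ℤ) +
          (1 / 2) * EFun η c φ (n+1) ((K : ℤ) + 1)) *
        (∑' l, (‖c l‖₊ : ℝ≥0∞)) * S ^ (n+2) := by
    calc (∑' m : Fin (n+2) → ℕ,
        (‖(fAux (n+2) (K : ℤ) η (padFin (n+2) φ m) : ℂ) *
            ∏ i, (c (m i) * Complex.exp (-Complex.I * φ (m i) * x) * γ (m i) x)‖₊ : ℝ≥0∞))
        = ∑' m : Fin (n+2) → ℕ,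
            (‖fAux (n+2) (K : ℤ) η (padFin (n+2) φ m)‖₊ : ℝ≥0∞) * ∏ i, b (m i) :=
          tsum_congr hterm
      _ ≤ ∑' m : Fin (n+2) → ℕ,
            ((‖η⁻¹‖₊ : ℝ≥0∞) * ∑ a ∈ ({-1, 0, 1} : Finset ℤ),
              (‖omegaCoef a‖₊ : ℝ≥0∞) * ((‖((Nat.factorial (n+2) : ℝ))⁻¹‖₊ : ℝ≥0∞) *
                ∑ σ : Equiv.Perm (Fin (n+2)), G ((K:ℤ)+a) (fun j => m (σ j.castSucc))))
            * ∏ i, b (m i) := by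
          refine ENNReal.tsum_le_tsum fun m => mul_le_mul_left ?_ _
          refine (fAux_nnnorm_le n (K:ℤ) hcond η (padFin (n+2) φ m)).trans (le_of_eq ?_)
          congr 1
          refine Finset.sum_congr rfl fun a _ => ?_
          congr 1
          congr 1
          refine Finset.sum_congr rfl fun σ _ => ?_
          simp only [hGdef]
          rw [hGperm a σ m]
      _ = (‖η⁻¹‖₊ : ℝ≥0∞) * ∑ a ∈ ({-1, 0, 1} : Finset ℤ),
            (‖omegaCoef a‖₊ : ℝ≥0∞) * ((‖((Nat.factorial (n+2) : ℝ))⁻¹‖₊ : ℝ≥0∞) *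
              ∑ σ : Equiv.Perm (Fin (n+2)),
                ∑' m : Fin (n+2) → ℕ,
                  G ((K:ℤ)+a) (fun j => m (σ j.castSucc)) * ∏ i, b (m i)) :=
          tsum_rearrange _ _ _ _ _ _
      _ = (‖η⁻¹‖₊ : ℝ≥0∞) * ∑ a ∈ ({-1, 0, 1} : Finset ℤ),
            (‖omegaCoef a‖₊ : ℝ≥0∞) * ((‖((Nat.factorial (n+2) : ℝ))⁻¹‖₊ : ℝ≥0∞) *
              ∑ σ : Equiv.Perm (Fin (n+2)),
                (∑' m' : Fin (n+1) → ℕ, G ((K:ℤ)+a) m' * ∏ i, b (m' i)) * ∑' y, b y) := by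
          congr 1
          refine Finset.sum_congr rfl fun a _ => ?_
          congr 2
          exact Finset.sum_congr rfl fun σ _ => hsplit a σ
      _ = (‖η⁻¹‖₊ : ℝ≥0∞) * ∑ a ∈ ({-1, 0, 1} : Finset ℤ),
            (‖omegaCoef a‖₊ : ℝ≥0∞) *
              ((∑' m' : Fin (n+1) → ℕ, G ((K:ℤ)+a) m' * ∏ i, b (m' i)) * ∑' y, b y) := by
          congr 1
          refine Finset.sum_congr rfl fun a _ => ?_
          congr 1
          rw [Finset.sum_const, Finset.card_univ, Fintype.card_perm, Fintype.card_fin,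
            nsmul_eq_mul, ← mul_assoc, hfact, one_mul]
      _ ≤ (‖η⁻¹‖₊ : ℝ≥0∞) * ∑ a ∈ ({-1, 0, 1} : Finset ℤ),
            (‖omegaCoef a‖₊ : ℝ≥0∞) *
              ((EFun η c φ (n+1) ((K:ℤ)+a) * S ^ (n+1)) * ((∑' l, (‖c l‖₊ : ℝ≥0∞)) * S)) := by
          refine mul_le_mul_right (Finset.sum_le_sum fun a _ => mul_le_mul_right ?_ _) _
          exact mul_le_mul' (hbound a) hlast
      _ = (ENNReal.ofReal η)⁻¹ *
            ((1 / 2) * EFun η c φ (n+1) ((K : ℤ) - 1) + EFun η c φ (n+1) (K : ℤ) +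
              (1 / 2) * EFun η c φ (n+1) ((K : ℤ) + 1)) *
            (∑' l, (‖c l‖₊ : ℝ≥0∞)) * S ^ (n+2) := by
          rw [hCη]
          rw [show ({-1, 0, 1} : Finset ℤ) = insert (-1) (insert 0 {1}) from rfl]
          rw [Finset.sum_insert (by decide), Finset.sum_insert (by decide),
            Finset.sum_singleton]
          rw [hw0, hw1, hwm1]
          rw [show (K:ℤ) + -1 = (K:ℤ) - 1 by ring, show (K:ℤ) + 0 = (K:ℤ) by ring]
          rw [pow_succ S (n+1)]
          ring
  constructor
  · exact hmain
  · intro hfin θ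
    have hexp2 : ‖Complex.exp (Complex.I * (K : ℂ) * ((η : ℂ) * x + 2 * θ))‖₊ = 1 := by
      have hre : Complex.I * (K : ℂ) * ((η : ℂ) * x + 2 * θ)
          = (((K : ℝ) * (η * x + 2 * θ) : ℝ) : ℂ) * Complex.I := by
        push_cast; ring
      refine NNReal.eq ?_
      rw [coe_nnnorm, hre]
      simpa using Complex.norm_exp_ofReal_mul_I ((K : ℝ) * (η * x + 2 * θ))
    have hsum : (∑' m : Fin (n+2) → ℕ,
        ((‖(fAux (n+2) (K : ℤ) η (padFin (n+2) φ m) : ℂ) *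
            (∏ i, (c (m i) * Complex.exp (-Complex.I * φ (m i) * x) * γ (m i) x)) *
            Complex.exp (Complex.I * K * (η * x + 2 * θ))‖₊ : NNReal) : ℝ≥0∞)) ≠ ⊤ := by
      have heq : ∀ m : Fin (n+2) → ℕ,
          ((‖(fAux (n+2) (K : ℤ) η (padFin (n+2) φ m) : ℂ) *
              (∏ i, (c (m i) * Complex.exp (-Complex.I * φ (m i) * x) * γ (m i) x)) *
              Complex.exp (Complex.I * K * (η * x + 2 * θ))‖₊ : ℝ≥0∞))
          = (‖(fAux (n+2) (K : ℤ) η (padFin (n+2) φ m) : ℂ) *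
              ∏ i, (c (m i) * Complex.exp (-Complex.I * φ (m i) * x) * γ (m i) x)‖₊ : ℝ≥0∞) := by
        intro m
        rw [nnnorm_mul, hexp2, mul_one]
      rw [tsum_congr heq]
      exact (hmain.trans_lt hfin).ne
    have hs1 := ENNReal.tsum_coe_ne_top_iff_summable.1 hsum
    have hs2 := NNReal.summable_coe.2 hs1
    simpa [coe_nnnorm] using hs2
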